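/- Non-equivalence of the nonholonomic and vakonomic Herglotz principles (counterexample): Let γₓ ∈ ℝ with γₓ ≠ 0 and consider the first-order field Lagrangian on ℝ² given by L(t, x, u, u_t, u_x, z^t, z^x) = (1/2)(u_t² + u_x²) − u·γₓ·z^x. Define the section u(t,x) = t, z^t(t,x) = t/2, z^x(t,x) = 0. Then: (1) the constraint holds, i.e. ∂_t z^t + ∂_x z^x = L(j(t,x)) for all (t,x); (2) the Herglotz field equations hold everywhere, i.e. ∂_t[∂L/∂u_t(j)] + ∂_x[∂L/∂u_x(j)] − ∂L/∂u(j) = ∂L/∂u_t(j)·∂L/∂z^t(j) + ∂L/∂u_x(j)·∂L/∂z^x(j) at every (t,x); (3) the closed action dependence condition fails everywhere: ∂_t[∂L/∂z^x(j(·))](t,x) = −γₓ ≠ 0 = ∂_x[∂L/∂z^t(j(·))](t,x). Hence this section is a solution of the nonholonomic Herglotz principle but not of the vakonomic one. -/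
import Mathlib


noncomputable section

/-- The Lagrangian `L = (1/2)(u_t² + u_x²) − u·γₓ·z^x`. -/
def Lag (γx t x u ut ux zt zx : ℝ) : ℝ := (1 / 2) * (ut ^ 2 + ux ^ 2) - u * γx * zx

/-- `∂L/∂u`. -/
def Lu (γx t x u ut ux zt zx : ℝ) : ℝ := deriv (fun s => Lag γx t x s ut ux zt zx) u

/-- `∂L/∂u_t`. -/
def Lut (γx t x u ut ux zt zx : ℝ) : ℝ := deriv (fun s => Lag γx t x u s ux zt zx) ut

/-- `∂L/∂u_x`. -/
def Lux (γx t x u ut ux zt zx : ℝ) : ℝ := deriv (fun s => Lag γx t x u ut s zt zx) ux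

/-- `∂L/∂z^t`. -/
def Lzt (γx t x u ut ux zt zx : ℝ) : ℝ := deriv (fun s => Lag γx t x u ut ux s zx) zt

/-- `∂L/∂z^x`. -/
def Lzx (γx t x u ut ux zt zx : ℝ) : ℝ := deriv (fun s => Lag γx t x u ut ux zt s) zx

/-- The field `u(t,x) = t`. -/
def uf : ℝ → ℝ → ℝ := fun t _ => t

/-- The action density `z^t(t,x) = t/2`. -/
def ztf : ℝ → ℝ → ℝ := fun t _ => t / 2

/-- The action density `z^x(t,x) = 0`. -/
def zxf : ℝ → ℝ → ℝ := fun _ _ => 0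

/-- `∂_t u` along the section. -/
def jut (t x : ℝ) : ℝ := deriv (fun s => uf s x) t

/-- `∂_x u` along the section. -/
def jux (t x : ℝ) : ℝ := deriv (fun s => uf t s) x

/-- A function `F` of the jet variables, evaluated along the first-jet
prolongation `j(t,x)` of the section `(uf, ztf, zxf)`. -/
def onJet (F : ℝ → ℝ → ℝ → ℝ → ℝ → ℝ → ℝ → ℝ) (t x : ℝ) : ℝ :=
  F t x (uf t x) (jut t x) (jux t x) (ztf t x) (zxf t x)

/-- Non-equivalence of the nonholonomic and vakonomic Herglotz principles:
for `L = (1/2)(u_t² + u_x²) − uγₓz^x` with `γₓ ≠ 0`, the section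
`u = t`, `z^t = t/2`, `z^x = 0` satisfies the constraint and the Herglotz
field equations, but the closed action dependence condition fails everywhere:
`∂_t[∂L/∂z^x ∘ j] = −γₓ ≠ 0 = ∂_x[∂L/∂z^t ∘ j]`. -/

lemma Lu_eq (γx t x u ut ux zt zx : ℝ) : Lu γx t x u ut ux zt zx = -(γx * zx) := by
  simp [Lu, Lag, mul_assoc]

lemma Lut_eq (γx t x u ut ux zt zx : ℝ) : Lut γx t x u ut ux zt zx = ut := by
  have h : (fun s => Lag γx t x u s ux zt zx)
      = fun s => 2⁻¹ * s ^ 2 + (2⁻¹ * ux ^ 2 - u * γx * zx) := by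
    funext s; unfold Lag; ring
  simp [Lut, h]

lemma Lux_eq (γx t x u ut ux zt zx : ℝ) : Lux γx t x u ut ux zt zx = ux := by
  have h : (fun s => Lag γx t x u ut s zt zx)
      = fun s => 2⁻¹ * s ^ 2 + (2⁻¹ * ut ^ 2 - u * γx * zx) := by
    funext s; unfold Lag; ring
  simp [Lux, h]

lemma Lzt_eq (γx t x u ut ux zt zx : ℝ) : Lzt γx t x u ut ux zt zx = 0 := by
  simp [Lzt, Lag]

lemma Lzx_eq (γx t x u ut ux zt zx : ℝ) : Lzx γx t x u ut ux zt zx = -(u * γx) := by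
  have h : (fun s => Lag γx t x u ut ux zt s)
      = fun s => -(u * γx) * s + 2⁻¹ * (ut ^ 2 + ux ^ 2) := by
    funext s; unfold Lag; ring
  rw [Lzx, h]
  simpa using (((hasDerivAt_id zx).const_mul (-(u * γx))).add_const (2⁻¹ * (ut ^ 2 + ux ^ 2))).deriv

lemma jut_eq (t x : ℝ) : jut t x = 1 := by simp [jut, uf]

lemma jux_eq (t x : ℝ) : jux t x = 0 := by simp [jux, uf]

theorem nonholonomic_vakonomic_not_equivalent (γx : ℝ) (hγx : γx ≠ 0) :
    -- (1) the constraint holds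
    (∀ t x : ℝ,
      deriv (fun s => ztf s x) t + deriv (fun s => zxf t s) x
        = onJet (Lag γx) t x) ∧
    -- (2) the Herglotz field equations hold everywhere
    (∀ t x : ℝ,
      deriv (fun s => onJet (Lut γx) s x) t
          + deriv (fun s => onJet (Lux γx) t s) x
          - onJet (Lu γx) t x
        = onJet (Lut γx) t x * onJet (Lzt γx) t x
          + onJet (Lux γx) t x * onJet (Lzx γx) t x) ∧
    -- (3) the closed action dependence condition fails everywhere
    (∀ t x : ℝ,
      deriv (fun s => onJet (Lzx γx) s x) t = -γx ∧
      -γx ≠ 0 ∧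
      deriv (fun s => onJet (Lzt γx) t s) x = 0) := by
  refine ⟨fun t x => ?_, fun t x => ?_, fun t x => ⟨?_, neg_ne_zero.mpr hγx, ?_⟩⟩
  · simp [onJet, Lag, ztf, zxf, uf, jut_eq, jux_eq]
  · simp only [onJet, Lu_eq, Lut_eq, Lux_eq, Lzt_eq, Lzx_eq, jut_eq, jux_eq,
      uf, ztf, zxf]
    simp
  · simp only [onJet, Lzx_eq, uf]
    simp [deriv_const_mul_field]
  · simp only [onJet, Lzt_eq]
    simp


end
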